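/- Pathwise convergence of square roots of fractional Cox–Ingersoll–Ross paths to a reflected fractional Ornstein–Uhlenbeck path (deterministic form of the paper's Theorem 3, continuum version): let y₀, b, σ > 0, and let B : [0,∞) → ℝ be continuous with B(0) = 0 and locally Hölder continuous, i.e. there exists λ ∈ (0,1) such that for every T > 0 there is Λ_T ≥ 0 with |B(t) − B(s)| ≤ Λ_T·|t − s|^λ for all s, t ∈ [0,T]. Suppose that for every ε > 0 there is a continuous, strictly positive Y_ε : [0,∞) → ℝ solving E(ε). Then: (1) for every t ≥ 0 the limit Y(t) := lim_{ε↓0} Y_ε(t) exists, is finite and nonnegative; (2) the limit L(t) := lim_{ε↓0} (1/2)·∫₀ᵗ ε/Y_ε(s) ds exists for every t, L is a reflection function for Y, and Y(t) = y₀ − (b/2)·∫₀ᵗ Y(s) ds + (σ/2)·B(t) + L(t) for all t ≥ 0; (3) for every T > 0, sup_{t∈[0,T]} |Y(t) − Y_ε(t)| → 0 and sup_{t∈[0,T]} |L(t) − (1/2)·∫₀ᵗ ε/Y_ε(s) ds| → 0 as ε ↓ 0. -/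

import Mathlib

open Set Filter MeasureTheory intervalIntegral Topology

/-- `L` is a reflection function for `Y` on `[0, ∞)`: `L` is continuous, nondecreasing,
`L 0 = 0`, and `L` grows only at zeros of `Y`. -/
def IsReflectionFn (L Y : ℝ → ℝ) : Prop :=
  ContinuousOn L (Set.Ici 0) ∧ MonotoneOn L (Set.Ici 0) ∧ L 0 = 0 ∧
    ∀ s t : ℝ, 0 ≤ s → s ≤ t → (∀ u ∈ Set.Icc s t, 0 < Y u) → L t = L s

/-- A continuous, strictly positive `Y : [0, ∞) → ℝ` solves the singular equation `E(ε)`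
if `Y t = y₀ + (1/2) ∫₀ᵗ (ε / Y s - b * Y s) ds + (σ/2) B t` for all `t ≥ 0`. -/
def SolvesE (y₀ b σ : ℝ) (B : ℝ → ℝ) (ε : ℝ) (Y : ℝ → ℝ) : Prop :=
  ContinuousOn Y (Set.Ici 0) ∧ (∀ t, 0 ≤ t → 0 < Y t) ∧
    ∀ t, 0 ≤ t →
      Y t = y₀ + (1 / 2) * (∫ s in (0:ℝ)..t, (ε / Y s - b * Y s)) + (σ / 2) * B t

lemma aux_uIcc_subset_Ici {a c : ℝ} (ha : 0 ≤ a) (hc : 0 ≤ c) :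
    Set.uIcc a c ⊆ Set.Ici 0 := fun x hx => le_trans (le_min ha hc) hx.1

lemma aux_intg {f : ℝ → ℝ} (hf : ContinuousOn f (Set.Ici 0))
    {a c : ℝ} (ha : 0 ≤ a) (hc : 0 ≤ c) : IntervalIntegrable f volume a c :=
  (hf.mono (aux_uIcc_subset_Ici ha hc)).intervalIntegrable

lemma solves_cont_integrand {y₀ b σ : ℝ} {B : ℝ → ℝ} {ε : ℝ} {Y : ℝ → ℝ}
    (h : SolvesE y₀ b σ B ε Y) :
    ContinuousOn (fun s => ε / Y s - b * Y s) (Set.Ici 0) :=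
  (continuousOn_const.div h.1 (fun x hx => (h.2.1 x hx).ne')).sub
    (continuousOn_const.mul h.1)

lemma solves_zero {y₀ b σ : ℝ} {B : ℝ → ℝ} {ε : ℝ} {Y : ℝ → ℝ}
    (hB0 : B 0 = 0) (h : SolvesE y₀ b σ B ε Y) : Y 0 = y₀ := by
  have := h.2.2 0 le_rfl
  simpa [hB0] using this

/-- difference formula: the noise cancels in the difference of two solutions. -/
lemma solves_diff {y₀ b σ : ℝ} {B : ℝ → ℝ} {ε₁ ε₂ : ℝ} {Y₁ Y₂ : ℝ → ℝ}
    (h1 : SolvesE y₀ b σ B ε₁ Y₁) (h2 : SolvesE y₀ b σ B ε₂ Y₂)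
    {a c : ℝ} (ha : 0 ≤ a) (hac : a ≤ c) :
    (Y₁ c - Y₂ c) - (Y₁ a - Y₂ a) =
      (1 / 2) * ∫ s in a..c,
        ((ε₁ / Y₁ s - b * Y₁ s) - (ε₂ / Y₂ s - b * Y₂ s)) := by
  have hc : 0 ≤ c := ha.trans hac
  have hint1ac : IntervalIntegrable (fun s => ε₁ / Y₁ s - b * Y₁ s) volume a c :=
    aux_intg (solves_cont_integrand h1) ha hc
  have hint2ac : IntervalIntegrable (fun s => ε₂ / Y₂ s - b * Y₂ s) volume a c :=
    aux_intg (solves_cont_integrand h2) ha hc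
  have hint1a : IntervalIntegrable (fun s => ε₁ / Y₁ s - b * Y₁ s) volume 0 a :=
    aux_intg (solves_cont_integrand h1) le_rfl ha
  have hint2a : IntervalIntegrable (fun s => ε₂ / Y₂ s - b * Y₂ s) volume 0 a :=
    aux_intg (solves_cont_integrand h2) le_rfl ha
  have e1c := h1.2.2 c hc
  have e2c := h2.2.2 c hc
  have e1a := h1.2.2 a ha
  have e2a := h2.2.2 a ha
  have hadd1 := integral_add_adjacent_intervals hint1a hint1ac
  have hadd2 := integral_add_adjacent_intervals hint2a hint2ac
  have hsub : (∫ s in a..c, ((ε₁ / Y₁ s - b * Y₁ s) - (ε₂ / Y₂ s - b * Y₂ s)))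
      = (∫ s in a..c, (ε₁ / Y₁ s - b * Y₁ s)) - ∫ s in a..c, (ε₂ / Y₂ s - b * Y₂ s) :=
    integral_sub hint1ac hint2ac
  rw [hsub]
  rw [e1c, e2c, e1a, e2a, ← hadd1, ← hadd2]
  ring

/-- Comparison: solutions are monotone in `ε`. -/
lemma solves_comp {y₀ b σ : ℝ} {B : ℝ → ℝ} {ε₁ ε₂ : ℝ} {Y₁ Y₂ : ℝ → ℝ}
    (hb : 0 < b) (hB0 : B 0 = 0)
    (h1 : SolvesE y₀ b σ B ε₁ Y₁) (h2 : SolvesE y₀ b σ B ε₂ Y₂)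
    (hε2 : 0 < ε₂) (hεle : ε₂ ≤ ε₁) :
    ∀ t, 0 ≤ t → Y₂ t ≤ Y₁ t := by
  by_contra hcon
  push_neg at hcon
  obtain ⟨t₀, ht₀, hlt⟩ := hcon
  -- globally continuous version of the difference
  set Dc : ℝ → ℝ := fun t => Y₁ (max t 0) - Y₂ (max t 0) with hDcdef
  have hmax : Continuous fun t : ℝ => max t 0 := continuous_id.max continuous_const
  have hmem : ∀ t : ℝ, max t 0 ∈ Set.Ici (0:ℝ) := fun t => le_max_right t 0
  have hDc : Continuous Dc :=
    (h1.1.comp_continuous hmax hmem).sub (h2.1.comp_continuous hmax hmem)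
  have hDceq : ∀ t, 0 ≤ t → Dc t = Y₁ t - Y₂ t := by
    intro t ht; simp [hDcdef, max_eq_left ht]
  have hDc0 : Dc 0 = 0 := by
    rw [hDceq 0 le_rfl, solves_zero hB0 h1, solves_zero hB0 h2, sub_self]
  have hDt₀ : Dc t₀ < 0 := by rw [hDceq t₀ ht₀]; linarith
  -- the last time before t₀ where Dc ≥ 0
  set K : Set ℝ := Set.Icc 0 t₀ ∩ Dc ⁻¹' Set.Ici 0 with hKdef
  have hKne : K.Nonempty := ⟨0, ⟨le_rfl, ht₀⟩, by simp [hDc0]⟩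
  have hKcp : IsCompact K := isCompact_Icc.inter_right (isClosed_Ici.preimage hDc)
  obtain ⟨t₁, ht₁K, ht₁gr⟩ := hKcp.exists_isGreatest hKne
  obtain ⟨⟨ht₁0, ht₁t₀⟩, ht₁D⟩ := ht₁K
  have ht₁lt : t₁ < t₀ := by
    rcases lt_or_eq_of_le ht₁t₀ with h | h
    · exact h
    · exact absurd (h ▸ ht₁D) (not_le.mpr hDt₀)
  have hneg : ∀ u ∈ Set.Ioc t₁ t₀, Dc u < 0 := by
    intro u hu
    by_contra hge
    push_neg at hge
    have huK : u ∈ K := ⟨⟨ht₁0.trans hu.1.le, hu.2⟩, hge⟩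
    exact absurd (ht₁gr huK) (not_le.mpr hu.1)
  -- Dc t₁ = 0
  have ht₁le : Dc t₁ ≤ 0 := by
    haveI hne : (𝓝[Set.Ioc t₁ t₀] t₁).NeBot := by
      rw [nhdsWithin_Ioc_eq_nhdsGT ht₁lt]; infer_instance
    have htd : Filter.Tendsto Dc (𝓝[Set.Ioc t₁ t₀] t₁) (𝓝 (Dc t₁)) :=
      (hDc.continuousAt).continuousWithinAt
    refine le_of_tendsto htd ?_
    filter_upwards [self_mem_nhdsWithin] with u hu using (hneg u hu).le
  have ht₁eq : Dc t₁ = 0 := le_antisymm ht₁le ht₁D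
  -- integral identity and positivity
  have hdiff := solves_diff h1 h2 ht₁0 ht₁lt.le
  have hY1eqY2 : Y₁ t₁ = Y₂ t₁ := by
    have := ht₁eq; rw [hDceq t₁ ht₁0] at this; linarith
  have hnn : ∀ s ∈ Set.Icc t₁ t₀,
      0 ≤ (ε₁ / Y₁ s - b * Y₁ s) - (ε₂ / Y₂ s - b * Y₂ s) := by
    intro s hs
    have hs0 : 0 ≤ s := ht₁0.trans hs.1
    have hY1 : 0 < Y₁ s := h1.2.1 s hs0
    have hY2 : 0 < Y₂ s := h2.2.1 s hs0
    have h12 : Y₁ s ≤ Y₂ s := by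
      rcases eq_or_lt_of_le hs.1 with h | h
      · rw [← h]; exact hY1eqY2.le
      · have := hneg s ⟨h, hs.2⟩; rw [hDceq s hs0] at this; linarith
    have hdd : ε₂ / Y₂ s ≤ ε₁ / Y₁ s :=
      calc ε₂ / Y₂ s ≤ ε₂ / Y₁ s := by gcongr
        _ ≤ ε₁ / Y₁ s := by gcongr
    have hbb : 0 ≤ b * (Y₂ s - Y₁ s) := mul_nonneg hb.le (by linarith)
    nlinarith
  have hintnn : 0 ≤ ∫ s in t₁..t₀,
      ((ε₁ / Y₁ s - b * Y₁ s) - (ε₂ / Y₂ s - b * Y₂ s)) :=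
    intervalIntegral.integral_nonneg ht₁lt.le hnn
  have ht₁eq' : Y₁ t₁ - Y₂ t₁ = 0 := by rw [hDceq t₁ ht₁0] at ht₁eq; linarith
  linarith [hdiff, hintnn]

/-- Quantitative Cauchy estimate: `sup_{[0,T]} (Y₁ - Y₂) ≤ √(2 T ε₁)` for `ε₂ ≤ ε₁`. -/
lemma solves_cauchy {y₀ b σ : ℝ} {B : ℝ → ℝ} {ε₁ ε₂ : ℝ} {Y₁ Y₂ : ℝ → ℝ}
    (hb : 0 < b) (hB0 : B 0 = 0)
    (h1 : SolvesE y₀ b σ B ε₁ Y₁) (h2 : SolvesE y₀ b σ B ε₂ Y₂)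
    (hε2 : 0 < ε₂) (hεle : ε₂ ≤ ε₁) {T : ℝ} (hT : 0 ≤ T) :
    ∀ t ∈ Set.Icc (0:ℝ) T, Y₁ t - Y₂ t ≤ Real.sqrt (2 * T * ε₁) := by
  have hε1 : 0 < ε₁ := hε2.trans_le hεle
  have hcomp := solves_comp hb hB0 h1 h2 hε2 hεle
  set Dc : ℝ → ℝ := fun t => Y₁ (max t 0) - Y₂ (max t 0) with hDcdef
  have hmax : Continuous fun t : ℝ => max t 0 := continuous_id.max continuous_const
  have hmem : ∀ t : ℝ, max t 0 ∈ Set.Ici (0:ℝ) := fun t => le_max_right t 0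
  have hDc : Continuous Dc :=
    (h1.1.comp_continuous hmax hmem).sub (h2.1.comp_continuous hmax hmem)
  have hDceq : ∀ t, 0 ≤ t → Dc t = Y₁ t - Y₂ t := by
    intro t ht; simp [hDcdef, max_eq_left ht]
  have hDc0 : Dc 0 = 0 := by
    rw [hDceq 0 le_rfl, solves_zero hB0 h1, solves_zero hB0 h2, sub_self]
  -- maximum of Dc on [0, T]
  obtain ⟨ts, htsmem, htsmax⟩ :=
    isCompact_Icc.exists_isMaxOn (Set.nonempty_Icc.mpr hT) hDc.continuousOn
  obtain ⟨M, hMdef⟩ : ∃ M : ℝ, M = Dc ts := ⟨_, rfl⟩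
  have hM_ge : ∀ t ∈ Set.Icc (0:ℝ) T, Y₁ t - Y₂ t ≤ M := by
    intro t ht
    rw [← hDceq t ht.1, hMdef]
    exact htsmax ht
  rcases le_or_gt M 0 with hM | hM
  · intro t ht
    exact (hM_ge t ht).trans (hM.trans (Real.sqrt_nonneg _))
  -- main case : 0 < M
  suffices hMle : M ≤ Real.sqrt (2 * T * ε₁) by
    intro t ht; exact (hM_ge t ht).trans hMle
  -- the last time before ts where Dc ≤ M/2
  set K : Set ℝ := Set.Icc 0 ts ∩ Dc ⁻¹' Set.Iic (M/2) with hKdef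
  have hKne : K.Nonempty := by
    refine ⟨0, ⟨le_rfl, htsmem.1⟩, ?_⟩
    simp only [Set.mem_preimage, Set.mem_Iic, hDc0]
    linarith
  have hKcp : IsCompact K := isCompact_Icc.inter_right (isClosed_Iic.preimage hDc)
  obtain ⟨t₁, ht₁K, ht₁gr⟩ := hKcp.exists_isGreatest hKne
  obtain ⟨⟨ht₁0, ht₁ts⟩, ht₁D⟩ := ht₁K
  simp only [Set.mem_preimage, Set.mem_Iic] at ht₁D
  have ht₁lt : t₁ < ts := by
    rcases lt_or_eq_of_le ht₁ts with h | h
    · exact h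
    · exfalso
      rw [h, ← hMdef] at ht₁D
      linarith
  have hbig : ∀ u ∈ Set.Ioc t₁ ts, M / 2 < Dc u := by
    intro u hu
    by_contra hge
    push_neg at hge
    have huK : u ∈ K := ⟨⟨ht₁0.trans hu.1.le, hu.2⟩, hge⟩
    exact absurd (ht₁gr huK) (not_le.mpr hu.1)
  -- integral identity between t₁ and ts
  have hdiff := solves_diff h1 h2 ht₁0 ht₁lt.le
  -- bound the integrand by ε₁ / Y₁ on [t₁, ts]
  have hint1 : IntervalIntegrable
      (fun s => (ε₁ / Y₁ s - b * Y₁ s) - (ε₂ / Y₂ s - b * Y₂ s)) volume t₁ ts :=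
    aux_intg ((solves_cont_integrand h1).sub (solves_cont_integrand h2)) ht₁0
      (ht₁0.trans ht₁lt.le)
  have hint2 : IntervalIntegrable (fun s => ε₁ / Y₁ s) volume t₁ ts :=
    aux_intg (continuousOn_const.div h1.1 (fun x hx => (h1.2.1 x hx).ne')) ht₁0
      (ht₁0.trans ht₁lt.le)
  have hmono1 : (∫ s in t₁..ts, ((ε₁ / Y₁ s - b * Y₁ s) - (ε₂ / Y₂ s - b * Y₂ s)))
      ≤ ∫ s in t₁..ts, ε₁ / Y₁ s := by
    apply intervalIntegral.integral_mono_on ht₁lt.le hint1 hint2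
    intro s hs
    have hs0 : 0 ≤ s := ht₁0.trans hs.1
    have hY2pos : 0 < Y₂ s := h2.2.1 s hs0
    have hd : 0 ≤ ε₂ / Y₂ s := le_of_lt (div_pos hε2 hY2pos)
    have hD : 0 ≤ Y₁ s - Y₂ s := sub_nonneg.mpr (hcomp s hs0)
    have hbb : 0 ≤ b * (Y₁ s - Y₂ s) := mul_nonneg hb.le hD
    nlinarith
  -- bound ∫ ε₁ / Y₁ over (t₁, ts] by the constant 2 ε₁ / M
  have hmono2 : (∫ s in t₁..ts, ε₁ / Y₁ s) ≤ (ts - t₁) * (2 * ε₁ / M) := by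
    rw [intervalIntegral.integral_of_le ht₁lt.le]
    have hconst : (∫ _ in Set.Ioc t₁ ts, (2 * ε₁ / M) ∂volume)
        = (ts - t₁) * (2 * ε₁ / M) := by
      rw [MeasureTheory.setIntegral_const, Real.volume_real_Ioc_of_le ht₁lt.le, smul_eq_mul]
    rw [← hconst]
    apply MeasureTheory.setIntegral_mono_on
    · exact (intervalIntegrable_iff_integrableOn_Ioc_of_le ht₁lt.le).mp hint2
    · exact MeasureTheory.integrableOn_const measure_Ioc_lt_top.ne
    · exact measurableSet_Ioc
    · intro s hs
      have hs0 : 0 ≤ s := ht₁0.trans hs.1.le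
      have hDs : M / 2 < Dc s := hbig s hs
      rw [hDceq s hs0] at hDs
      have hY2pos : 0 < Y₂ s := h2.2.1 s hs0
      have hY1big : M / 2 ≤ Y₁ s := by linarith
      have hM2 : (0:ℝ) < M / 2 := by linarith
      calc ε₁ / Y₁ s ≤ ε₁ / (M / 2) := by gcongr
        _ = 2 * ε₁ / M := by rw [div_div_eq_mul_div]; ring_nf
  -- assemble
  have hDts : Dc ts = Y₁ ts - Y₂ ts := hDceq ts htsmem.1
  have hDt₁ : Dc t₁ = Y₁ t₁ - Y₂ t₁ := hDceq t₁ ht₁0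
  have hMM : M * M ≤ 2 * T * ε₁ := by
    have hts_le : ts - t₁ ≤ T := by linarith [htsmem.2]
    have heps : 0 ≤ ε₁ / M := div_nonneg hε1.le hM.le
    have hdiff' : M - Dc t₁ = (1/2) * ∫ s in t₁..ts,
        ((ε₁ / Y₁ s - b * Y₁ s) - (ε₂ / Y₂ s - b * Y₂ s)) := by
      rw [hMdef, hDts, hDt₁]; exact hdiff
    have e : (1:ℝ)/2 * ((ts - t₁) * (2 * ε₁ / M)) = (ts - t₁) * (ε₁ / M) := by ring
    have h1' : M / 2 ≤ (ts - t₁) * (ε₁ / M) := by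
      linarith [hdiff', hmono1, hmono2, ht₁D, e]
    have h2' : (ts - t₁) * (ε₁ / M) ≤ T * (ε₁ / M) :=
      mul_le_mul_of_nonneg_right hts_le heps
    have h3' : M / 2 * M ≤ T * (ε₁ / M) * M :=
      mul_le_mul_of_nonneg_right (h1'.trans h2') hM.le
    have h4' : T * (ε₁ / M) * M = T * ε₁ := by field_simp
    have h5' : M / 2 * M = M * M / 2 := by ring
    linarith
  calc M = Real.sqrt (M * M) := (Real.sqrt_mul_self hM.le).symm
    _ ≤ Real.sqrt (2 * T * ε₁) := Real.sqrt_le_sqrt hMM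

lemma solves_Zident {y₀ b σ ε : ℝ} {B Y : ℝ → ℝ}
    (h : SolvesE y₀ b σ B ε Y) {t : ℝ} (ht : 0 ≤ t) :
    (1/2) * (∫ s in (0:ℝ)..t, ε / Y s)
      = Y t - y₀ - (σ/2) * B t + (b/2) * ∫ s in (0:ℝ)..t, Y s := by
  have hintq : IntervalIntegrable (fun s => ε / Y s) volume 0 t :=
    aux_intg (continuousOn_const.div h.1 fun x hx => (h.2.1 x hx).ne') le_rfl ht
  have hintY : IntervalIntegrable Y volume 0 t := aux_intg h.1 le_rfl ht
  have hsplit : (∫ s in (0:ℝ)..t, (ε / Y s - b * Y s))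
      = (∫ s in (0:ℝ)..t, ε / Y s) - b * ∫ s in (0:ℝ)..t, Y s := by
    rw [integral_sub hintq (hintY.const_mul b), intervalIntegral.integral_const_mul]
  have heq := h.2.2 t ht
  rw [hsplit] at heq
  linarith

lemma solves_Zincr {y₀ b σ ε : ℝ} {B Y : ℝ → ℝ}
    (h : SolvesE y₀ b σ B ε Y) {s t : ℝ} (hs : 0 ≤ s) (hst : s ≤ t) :
    (1/2) * (∫ u in (0:ℝ)..t, ε / Y u) - (1/2) * (∫ u in (0:ℝ)..s, ε / Y u)
      = (1/2) * ∫ u in s..t, ε / Y u := by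
  have hcont : ContinuousOn (fun u => ε / Y u) (Set.Ici 0) :=
    continuousOn_const.div h.1 fun x hx => (h.2.1 x hx).ne'
  have h1 : IntervalIntegrable (fun u => ε / Y u) volume 0 s := aux_intg hcont le_rfl hs
  have h2 : IntervalIntegrable (fun u => ε / Y u) volume s t := aux_intg hcont hs (hs.trans hst)
  have := integral_add_adjacent_intervals h1 h2
  linarith

lemma contOn_Ici_of_Icc {f : ℝ → ℝ} (h : ∀ T, 0 ≤ T → ContinuousOn f (Set.Icc 0 T)) :
    ContinuousOn f (Set.Ici 0) := by
  intro t ht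
  have ht0 : (0:ℝ) ≤ t := ht
  have h1 : ContinuousWithinAt f (Set.Icc 0 (t+1)) t :=
    h (t+1) (by linarith) t ⟨ht0, by linarith⟩
  apply h1.mono_of_mem_nhdsWithin
  rw [show Set.Icc (0:ℝ) (t+1) = Set.Ici 0 ∩ Set.Iic (t+1) from (Set.Ici_inter_Iic).symm]
  exact Filter.inter_mem self_mem_nhdsWithin
    (mem_nhdsWithin_of_mem_nhds (Iic_mem_nhds (lt_add_one t)))

lemma tendsto_sqrt_mul_zero (c : ℝ) :
    Filter.Tendsto (fun ε : ℝ => Real.sqrt (c * ε)) (nhdsWithin 0 (Set.Ioi 0)) (nhds 0) := by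
  have h1 : Continuous fun ε : ℝ => Real.sqrt (c * ε) :=
    Real.continuous_sqrt.comp (continuous_const.mul continuous_id)
  have h2 := h1.tendsto 0
  simp only [mul_zero, Real.sqrt_zero] at h2
  exact h2.mono_left nhdsWithin_le_nhds

/-- Pathwise convergence of square roots of fractional CIR paths to a reflected
fractional OU path (deterministic form of the paper's Theorem 3, continuum version). -/
theorem stmt_12 (y₀ b σ : ℝ) (hy₀ : 0 < y₀) (hb : 0 < b) (hσ : 0 < σ)
    (B : ℝ → ℝ) (hBc : ContinuousOn B (Set.Ici 0)) (hB0 : B 0 = 0)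
    (hHol : ∃ lam : ℝ, 0 < lam ∧ lam < 1 ∧ ∀ T, 0 < T → ∃ Λ, 0 ≤ Λ ∧
      ∀ s ∈ Set.Icc (0:ℝ) T, ∀ t ∈ Set.Icc (0:ℝ) T, |B t - B s| ≤ Λ * |t - s| ^ lam)
    (Yε : ℝ → ℝ → ℝ) (hYε : ∀ ε, 0 < ε → SolvesE y₀ b σ B ε (Yε ε)) :
    ∃ Y L : ℝ → ℝ,
      (∀ t, 0 ≤ t →
        (0 ≤ Y t ∧ Filter.Tendsto (fun ε => Yε ε t)
          (nhdsWithin 0 (Set.Ioi 0)) (nhds (Y t))) ∧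
        Filter.Tendsto (fun ε => (1 / 2) * ∫ s in (0:ℝ)..t, ε / Yε ε s)
          (nhdsWithin 0 (Set.Ioi 0)) (nhds (L t))) ∧
      IsReflectionFn L Y ∧
      (∀ t, 0 ≤ t →
        Y t = y₀ - (b / 2) * (∫ s in (0:ℝ)..t, Y s) + (σ / 2) * B t + L t) ∧
      (∀ T, 0 < T →
        TendstoUniformlyOn (fun ε => Yε ε) Y (nhdsWithin 0 (Set.Ioi 0)) (Set.Icc 0 T) ∧
        TendstoUniformlyOn (fun ε t => (1 / 2) * ∫ s in (0:ℝ)..t, ε / Yε ε s) L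
          (nhdsWithin 0 (Set.Ioi 0)) (Set.Icc 0 T)) := by
  clear hHol
  haveI hNB : (nhdsWithin (0:ℝ) (Set.Ioi 0)).NeBot := nhdsGT_neBot 0
  set Y : ℝ → ℝ := fun t => sInf ((fun ε => Yε ε t) '' Set.Ioo 0 1) with hYdef
  have half : (1/2 : ℝ) ∈ Set.Ioo (0:ℝ) 1 := by norm_num
  have hSne : ∀ t : ℝ, ((fun ε => Yε ε t) '' Set.Ioo 0 1).Nonempty :=
    fun t => ⟨_, ⟨1/2, half, rfl⟩⟩
  have hSbdd : ∀ t, 0 ≤ t → BddBelow ((fun ε => Yε ε t) '' Set.Ioo 0 1) := by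
    intro t ht
    refine ⟨0, ?_⟩
    rintro y ⟨ε, hε, rfl⟩
    exact ((hYε ε hε.1).2.1 t ht).le
  have hYnn : ∀ t, 0 ≤ t → 0 ≤ Y t := by
    intro t ht
    apply le_csInf (hSne t)
    rintro y ⟨ε, hε, rfl⟩
    exact ((hYε ε hε.1).2.1 t ht).le
  have hYle : ∀ t, 0 ≤ t → ∀ ε ∈ Set.Ioo (0:ℝ) 1, Y t ≤ Yε ε t :=
    fun t ht ε hε => csInf_le (hSbdd t ht) ⟨ε, hε, rfl⟩
  have hIoo : Set.Ioo (0:ℝ) 1 ∈ nhdsWithin (0:ℝ) (Set.Ioi 0) :=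
    Ioo_mem_nhdsGT_of_mem (by norm_num : (0:ℝ) ∈ Set.Ico (0:ℝ) 1)
  -- two-sided uniform estimate
  have key : ∀ T, 0 ≤ T → ∀ t ∈ Set.Icc (0:ℝ) T, ∀ ε ∈ Set.Ioo (0:ℝ) 1,
      |Yε ε t - Y t| ≤ Real.sqrt (2 * T * ε) := by
    intro T hT t ht ε hε
    have hsq := Real.sqrt_nonneg (2*T*ε)
    have hup : Yε ε t - Real.sqrt (2*T*ε) ≤ Y t := by
      apply le_csInf (hSne t)
      rintro y ⟨ε₂, hε₂, rfl⟩
      rcases le_total ε₂ ε with hle | hle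
      · have := solves_cauchy hb hB0 (hYε ε hε.1) (hYε ε₂ hε₂.1) hε₂.1 hle hT t ht
        linarith
      · have := solves_comp hb hB0 (hYε ε₂ hε₂.1) (hYε ε hε.1) hε.1 hle t ht.1
        linarith
    have hlow := hYle t ht.1 ε hε
    rw [abs_le]
    exact ⟨by linarith, by linarith⟩
  -- pointwise convergence of Yε
  have hYtend : ∀ t, 0 ≤ t →
      Filter.Tendsto (fun ε => Yε ε t) (nhdsWithin 0 (Set.Ioi 0)) (nhds (Y t)) := by
    intro t ht
    rw [tendsto_iff_dist_tendsto_zero]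
    apply tendsto_of_tendsto_of_tendsto_of_le_of_le' tendsto_const_nhds
      (tendsto_sqrt_mul_zero (2*t))
    · exact Filter.Eventually.of_forall fun ε => dist_nonneg
    · filter_upwards [hIoo] with ε hε
      rw [Real.dist_eq]
      exact key t ht t ⟨ht, le_rfl⟩ ε hε
  -- uniform convergence of Yε
  have hYuni : ∀ T, 0 ≤ T →
      TendstoUniformlyOn (fun ε => Yε ε) Y (nhdsWithin 0 (Set.Ioi 0)) (Set.Icc 0 T) := by
    intro T hT
    rw [Metric.tendstoUniformlyOn_iff]
    intro δ hδ
    have hev : ∀ᶠ ε in nhdsWithin (0:ℝ) (Set.Ioi 0), Real.sqrt (2*T*ε) < δ :=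
      (tendsto_sqrt_mul_zero (2*T)).eventually_lt_const hδ
    filter_upwards [hev, hIoo] with ε h1 h2 t ht
    rw [Real.dist_eq, abs_sub_comm]
    exact lt_of_le_of_lt (key T hT t ht ε h2) h1
  -- continuity of Y
  have hYcontIcc : ∀ T, 0 ≤ T → ContinuousOn Y (Set.Icc 0 T) := by
    intro T hT
    apply (hYuni T hT).continuousOn
    apply Filter.Eventually.frequently
    filter_upwards [hIoo] with ε hε
    exact (hYε ε hε.1).1.mono (fun x hx => hx.1)
  have hYcont : ContinuousOn Y (Set.Ici 0) := contOn_Ici_of_Icc hYcontIcc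
  -- convergence of the integrals of Yε
  have hintY : ∀ {a c : ℝ}, 0 ≤ a → 0 ≤ c → IntervalIntegrable Y volume a c :=
    fun ha hc => aux_intg hYcont ha hc
  have intbound : ∀ T, 0 ≤ T → ∀ t ∈ Set.Icc (0:ℝ) T, ∀ ε ∈ Set.Ioo (0:ℝ) 1,
      |(∫ s in (0:ℝ)..t, Yε ε s) - ∫ s in (0:ℝ)..t, Y s| ≤ Real.sqrt (2*T*ε) * T := by
    intro T hT t ht ε hε
    have hintYε : IntervalIntegrable (Yε ε) volume 0 t := aux_intg (hYε ε hε.1).1 le_rfl ht.1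
    rw [← integral_sub hintYε (hintY le_rfl ht.1)]
    have hbd : ∀ x ∈ Set.uIoc (0:ℝ) t, ‖Yε ε x - Y x‖ ≤ Real.sqrt (2*T*ε) := by
      intro x hx
      rw [Set.uIoc_of_le ht.1] at hx
      exact key T hT x ⟨hx.1.le, hx.2.trans ht.2⟩ ε hε
    have := intervalIntegral.norm_integral_le_of_norm_le_const hbd
    rw [Real.norm_eq_abs] at this
    calc |∫ s in (0:ℝ)..t, (Yε ε s - Y s)| ≤ Real.sqrt (2*T*ε) * |t - 0| := this
      _ ≤ Real.sqrt (2*T*ε) * T := by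
          rw [sub_zero, abs_of_nonneg ht.1]
          exact mul_le_mul_of_nonneg_left ht.2 (Real.sqrt_nonneg _)
  -- the reflection function
  set L : ℝ → ℝ := fun t => Y t - y₀ - (σ/2) * B t + (b/2) * ∫ s in (0:ℝ)..t, Y s
    with hLdef
  -- key estimate for Z
  have hZkey : ∀ T, 0 ≤ T → ∀ t ∈ Set.Icc (0:ℝ) T, ∀ ε ∈ Set.Ioo (0:ℝ) 1,
      |(1/2) * (∫ s in (0:ℝ)..t, ε / Yε ε s) - L t|
        ≤ (1 + b*T/2) * Real.sqrt (2*T*ε) := by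
    intro T hT t ht ε hε
    have hzi := solves_Zident (hYε ε hε.1) ht.1
    have heq : (1/2) * (∫ s in (0:ℝ)..t, ε / Yε ε s) - L t
        = (Yε ε t - Y t)
          + (b/2) * ((∫ s in (0:ℝ)..t, Yε ε s) - ∫ s in (0:ℝ)..t, Y s) := by
      rw [hzi]; simp only [hLdef]; ring
    rw [heq]
    have h1 := key T hT t ht ε hε
    have h2 := intbound T hT t ht ε hε
    have habs := abs_add_le (Yε ε t - Y t)
      ((b/2) * ((∫ s in (0:ℝ)..t, Yε ε s) - ∫ s in (0:ℝ)..t, Y s))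
    rw [abs_mul, abs_of_nonneg (by linarith : (0:ℝ) ≤ b/2)] at habs
    have h3 : (b/2) * |(∫ s in (0:ℝ)..t, Yε ε s) - ∫ s in (0:ℝ)..t, Y s|
        ≤ (b/2) * (Real.sqrt (2*T*ε) * T) := by
      apply mul_le_mul_of_nonneg_left h2 (by linarith)
    have he : (1 + b*T/2) * Real.sqrt (2*T*ε)
        = Real.sqrt (2*T*ε) + (b/2) * (Real.sqrt (2*T*ε) * T) := by ring
    linarith
  -- pointwise convergence of Z to L
  have hZtend : ∀ t, 0 ≤ t →
      Filter.Tendsto (fun ε => (1/2) * ∫ s in (0:ℝ)..t, ε / Yε ε s)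
        (nhdsWithin 0 (Set.Ioi 0)) (nhds (L t)) := by
    intro t ht
    rw [tendsto_iff_dist_tendsto_zero]
    have hb0 : Filter.Tendsto (fun ε : ℝ => (1 + b*t/2) * Real.sqrt (2*t*ε))
        (nhdsWithin 0 (Set.Ioi 0)) (nhds 0) := by
      have := (tendsto_sqrt_mul_zero (2*t)).const_mul (1 + b*t/2)
      simpa using this
    apply tendsto_of_tendsto_of_tendsto_of_le_of_le' tendsto_const_nhds hb0
    · exact Filter.Eventually.of_forall fun ε => dist_nonneg
    · filter_upwards [hIoo] with ε hε
      rw [Real.dist_eq]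
      exact hZkey t ht t ⟨ht, le_rfl⟩ ε hε
  -- uniform convergence of Z to L
  have hZuni : ∀ T, 0 ≤ T →
      TendstoUniformlyOn (fun ε t => (1/2) * ∫ s in (0:ℝ)..t, ε / Yε ε s) L
        (nhdsWithin 0 (Set.Ioi 0)) (Set.Icc 0 T) := by
    intro T hT
    rw [Metric.tendstoUniformlyOn_iff]
    intro δ hδ
    have hb0 : Filter.Tendsto (fun ε : ℝ => (1 + b*T/2) * Real.sqrt (2*T*ε))
        (nhdsWithin 0 (Set.Ioi 0)) (nhds 0) := by
      have := (tendsto_sqrt_mul_zero (2*T)).const_mul (1 + b*T/2)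
      simpa using this
    have hev : ∀ᶠ ε in nhdsWithin (0:ℝ) (Set.Ioi 0),
        (1 + b*T/2) * Real.sqrt (2*T*ε) < δ := hb0.eventually_lt_const hδ
    filter_upwards [hev, hIoo] with ε h1 h2 t ht
    rw [Real.dist_eq, abs_sub_comm]
    exact lt_of_le_of_lt (hZkey T hT t ht ε h2) h1
  -- Y 0 = y₀ and L 0 = 0
  have hY0 : Y 0 = y₀ := by
    apply le_antisymm
    · have h := csInf_le (hSbdd 0 le_rfl) ⟨1/2, half, rfl⟩
      exact le_of_le_of_eq h (solves_zero hB0 (hYε (1/2) half.1))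
    · apply le_csInf (hSne 0)
      rintro y ⟨ε, hε, rfl⟩
      exact (solves_zero hB0 (hYε ε hε.1)).ge
  have hL0 : L 0 = 0 := by
    simp only [hLdef, hY0, hB0, intervalIntegral.integral_same]
    ring
  -- L is nondecreasing on [0, ∞)
  have hLmono : MonotoneOn L (Set.Ici 0) := by
    intro s hs t ht hst
    have hs0 : (0:ℝ) ≤ s := hs
    have ht0 : (0:ℝ) ≤ t := ht
    have h1 : Filter.Tendsto
        (fun ε => (1/2) * (∫ u in (0:ℝ)..t, ε / Yε ε u)
          - (1/2) * ∫ u in (0:ℝ)..s, ε / Yε ε u)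
        (nhdsWithin 0 (Set.Ioi 0)) (nhds (L t - L s)) :=
      (hZtend t ht0).sub (hZtend s hs0)
    have h2 : ∀ᶠ ε in nhdsWithin (0:ℝ) (Set.Ioi 0),
        0 ≤ (1/2) * (∫ u in (0:ℝ)..t, ε / Yε ε u)
          - (1/2) * ∫ u in (0:ℝ)..s, ε / Yε ε u := by
      filter_upwards [self_mem_nhdsWithin] with ε hε
      have hεpos : (0:ℝ) < ε := hε
      rw [solves_Zincr (hYε ε hεpos) hs0 hst]
      have : 0 ≤ ∫ u in s..t, ε / Yε ε u := by
        apply intervalIntegral.integral_nonneg hst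
        intro u hu
        exact div_nonneg hεpos.le ((hYε ε hεpos).2.1 u (hs0.trans hu.1)).le
      linarith
    have := ge_of_tendsto h1 h2
    linarith
  -- L grows only at zeros of Y
  have hLgrow : ∀ s t : ℝ, 0 ≤ s → s ≤ t →
      (∀ u ∈ Set.Icc s t, 0 < Y u) → L t = L s := by
    intro s t hs hst hpos
    obtain ⟨u₀, hu₀mem, hu₀min⟩ := isCompact_Icc.exists_isMinOn
      (Set.nonempty_Icc.mpr hst) (hYcont.mono (fun u hu => hs.trans hu.1))
    have hδ : 0 < Y u₀ := hpos u₀ hu₀mem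
    have hdiffZ : ∀ ε ∈ Set.Ioo (0:ℝ) 1,
        (1/2) * (∫ u in (0:ℝ)..t, ε / Yε ε u)
          - (1/2) * (∫ u in (0:ℝ)..s, ε / Yε ε u)
        ≤ (1/2) * ((t - s) * (ε / Y u₀)) := by
      intro ε hε
      rw [solves_Zincr (hYε ε hε.1) hs hst]
      have hmono : (∫ u in s..t, ε / Yε ε u) ≤ ∫ _ in s..t, ε / Y u₀ := by
        apply intervalIntegral.integral_mono_on hst
        · exact aux_intg (continuousOn_const.div (hYε ε hε.1).1
            fun x hx => ((hYε ε hε.1).2.1 x hx).ne') hs (hs.trans hst)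
        · exact intervalIntegrable_const
        · intro u hu
          have hu0 : 0 ≤ u := hs.trans hu.1
          have hYu : Y u₀ ≤ Yε ε u := (hu₀min hu).trans (hYle u hu0 ε hε)
          have hε0 : (0:ℝ) ≤ ε := hε.1.le
          gcongr
      rw [intervalIntegral.integral_const, smul_eq_mul] at hmono
      linarith
    have h0 : Filter.Tendsto (fun ε : ℝ => (1/2) * ((t - s) * (ε / Y u₀)))
        (nhdsWithin 0 (Set.Ioi 0)) (nhds 0) := by
      have hc : Continuous fun ε : ℝ => (1/2) * ((t - s) * (ε / Y u₀)) :=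
        continuous_const.mul (continuous_const.mul (continuous_id.div_const _))
      have h0' : Filter.Tendsto (fun ε : ℝ => (1/2) * ((t - s) * (ε / Y u₀)))
          (nhds 0) (nhds 0) := by simpa using hc.tendsto 0
      exact h0'.mono_left nhdsWithin_le_nhds
    have h1 : Filter.Tendsto
        (fun ε => (1/2) * (∫ u in (0:ℝ)..t, ε / Yε ε u)
          - (1/2) * ∫ u in (0:ℝ)..s, ε / Yε ε u)
        (nhdsWithin 0 (Set.Ioi 0)) (nhds (L t - L s)) :=
      (hZtend t (hs.trans hst)).sub (hZtend s hs)
    have h2 : Filter.Tendsto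
        (fun ε => (1/2) * (∫ u in (0:ℝ)..t, ε / Yε ε u)
          - (1/2) * ∫ u in (0:ℝ)..s, ε / Yε ε u)
        (nhdsWithin 0 (Set.Ioi 0)) (nhds 0) := by
      apply tendsto_of_tendsto_of_tendsto_of_le_of_le' tendsto_const_nhds h0
      · filter_upwards [self_mem_nhdsWithin] with ε hε
        have hεpos : (0:ℝ) < ε := hε
        rw [solves_Zincr (hYε ε hεpos) hs hst]
        have : 0 ≤ ∫ u in s..t, ε / Yε ε u := by
          apply intervalIntegral.integral_nonneg hst
          intro u hu
          exact div_nonneg hεpos.le ((hYε ε hεpos).2.1 u (hs.trans hu.1)).le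
        linarith
      · filter_upwards [hIoo] with ε hε
        exact hdiffZ ε hε
    have := tendsto_nhds_unique h1 h2
    linarith
  -- continuity of L
  have hLcont : ContinuousOn L (Set.Ici 0) := by
    apply contOn_Ici_of_Icc
    intro T hT
    have hprim : ContinuousOn (fun t => ∫ s in (0:ℝ)..t, Y s) (Set.Icc 0 T) := by
      have hint : IntegrableOn Y (Set.uIcc 0 T) volume := by
        rw [Set.uIcc_of_le hT]
        exact (hYcont.mono (fun x hx => hx.1)).integrableOn_Icc
      exact (intervalIntegral.continuousOn_primitive_interval hint).mono
        (by rw [Set.uIcc_of_le hT])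
    exact (((hYcontIcc T hT).sub continuousOn_const).sub
      (continuousOn_const.mul (hBc.mono (fun x hx => hx.1)))).add
      (continuousOn_const.mul hprim)
  -- assemble everything
  refine ⟨Y, L, ?_, ⟨hLcont, hLmono, hL0, hLgrow⟩, ?_, ?_⟩
  · intro t ht
    exact ⟨⟨hYnn t ht, hYtend t ht⟩, hZtend t ht⟩
  · intro t ht
    simp only [hLdef]
    ring
  · intro T hT
    exact ⟨hYuni T hT.le, hZuni T hT.le⟩
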